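/- Let V be the vertex poset of a finite arborescence with thresholds, state space Ω, and let θ_v be the single-grain topple operator at vertex v. Then θ_v preserves the dominance order: if t ⊴ t' then θ_v(t) ⊴ θ_v(t'). -/

import Mathlib

/-- Dominance order on sand configurations: compare the sums over principal upsets. -/
def domRel {V : Type*} [Fintype V] [PartialOrder V]
    [DecidableRel ((· ≤ ·) : V → V → Prop)] (t t' : V → ℕ) : Prop :=
  ∀ v : V, ∑ w ∈ Finset.univ.filter (fun w => v ≤ w), t w ≤
    ∑ w ∈ Finset.univ.filter (fun w => v ≤ w), t' w

/-- Specification of the single-grain topple operator θ_v. -/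
def stepSpec {V : Type*} [PartialOrder V] [DecidableEq V] (T : V → ℕ) (v : V)
    (θ : (V → ℕ) → (V → ℕ)) : Prop :=
  ∀ t : V → ℕ, (∀ w, t w ≤ T w) →
    (t v = 0 → θ t = t) ∧
    (0 < t v →
      ((∀ w, w < v → t w = T w) → θ t = Function.update t v (t v - 1)) ∧
      (∀ w, w < v → t w < T w → (∀ u, w < u → u < v → t u = T u) →
        θ t = Function.update (Function.update t v (t v - 1)) w (t w + 1)))

section Aux

variable {V : Type*} [Fintype V] [PartialOrder V] [DecidableEq V]
  [DecidableRel ((· ≤ ·) : V → V → Prop)]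

/-- Local abbreviation for the sum over the principal upset of `u`. -/
private def Ss (u : V) (t : V → ℕ) : ℕ :=
  ∑ w ∈ Finset.univ.filter (fun w => u ≤ w), t w

private lemma sum_upd_mem (s : Finset V) (f : V → ℕ) (a : V) (b : ℕ) (ha : a ∈ s) :
    (∑ x ∈ s, Function.update f a b x) + f a = (∑ x ∈ s, f x) + b := by
  rw [Finset.sum_update_of_mem ha, Finset.sdiff_singleton_eq_erase,
    ← Finset.add_sum_erase s f ha]
  omega

private lemma sum_upd_notmem (s : Finset V) (f : V → ℕ) (a : V) (b : ℕ) (ha : a ∉ s) :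
    (∑ x ∈ s, Function.update f a b x) = ∑ x ∈ s, f x :=
  Finset.sum_congr rfl fun x hx =>
    Function.update_of_ne (by rintro rfl; exact ha hx) _ _

/-- Sums of dominated configurations over arbitrary upper sets are dominated,
in a forest-like poset (all principal downsets are chains). -/
private lemma upper_sum_le (hchain : ∀ v : V, IsChain (· ≤ ·) {w | w ≤ v})
    (t t' : V → ℕ) (hdom : domRel t t') (U : Finset V)
    (hU : ∀ x ∈ U, ∀ y, x ≤ y → y ∈ U) :
    ∑ x ∈ U, t x ≤ ∑ x ∈ U, t' x := by
  classical
  revert hU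
  induction U using Finset.strongInduction with
  | _ U ih =>
    intro hU
    rcases U.eq_empty_or_nonempty with rfl | hne
    · simp
    obtain ⟨m, hmU, hmin⟩ := (by obtain ⟨m, hm⟩ := Finset.exists_minimal hne; exact ⟨m, hm.1, fun x hx hlt => lt_irrefl _ (lt_of_lt_of_le hlt (hm.2 hx hlt.le))⟩ : ∃ m ∈ U, ∀ x ∈ U, ¬ x < m)
    set P : Finset V := Finset.univ.filter (fun w => m ≤ w) with hP
    have hPU : P ⊆ U := by
      intro x hx
      exact hU m hmU x (by simpa [hP] using hx)
    have hmP : m ∈ P := by simp [hP]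
    have hss : U \ P ⊂ U := Finset.sdiff_ssubset hPU ⟨m, hmP⟩
    have hupper : ∀ x ∈ U \ P, ∀ y, x ≤ y → y ∈ U \ P := by
      intro x hx y hxy
      rw [Finset.mem_sdiff] at hx
      obtain ⟨hxU, hxP⟩ := hx
      have hmx : ¬ m ≤ x := by simpa [hP] using hxP
      rw [Finset.mem_sdiff]
      refine ⟨hU x hxU y hxy, ?_⟩
      simp only [hP, Finset.mem_filter, Finset.mem_univ, true_and]
      intro hmy
      have hxm : x ≠ m := by
        rintro rfl; exact hmx le_rfl
      have := hchain y (show x ∈ {w | w ≤ y} from hxy)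
        (show m ∈ {w | w ≤ y} from hmy) hxm
      rcases this with h | h
      · exact hmin x hxU (lt_of_le_of_ne h hxm)
      · exact hmx h
    have e1 : (∑ x ∈ U \ P, t x) + ∑ x ∈ P, t x = ∑ x ∈ U, t x :=
      Finset.sum_sdiff hPU
    have e2 : (∑ x ∈ U \ P, t' x) + ∑ x ∈ P, t' x = ∑ x ∈ U, t' x :=
      Finset.sum_sdiff hPU
    have h1 := ih (U \ P) hss hupper
    have h2 := hdom m
    simp only [hP] at e1 e2 h1 h2 ⊢
    omega

/-- The key strictness lemma: if `t` still has room strictly between `u` and `v`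
(or is empty at `v`) while `t'` is full on `[u, v)` and nonempty at `v`, then the
dominance at `u` is strict. -/
private lemma key_lt (hchain : ∀ v : V, IsChain (· ≤ ·) {w | w ≤ v})
    (T : V → ℕ) (t t' : V → ℕ) (ht : ∀ w, t w ≤ T w)
    (hdom : domRel t t') (u v : V) (hu : u ≤ v)
    (hfull : ∀ x, u ≤ x → x < v → t' x = T x) (htv' : 1 ≤ t' v)
    (hgood : t v = 0 ∨ ∃ w, u ≤ w ∧ w < v ∧ t w < T w) :
    Ss u t < Ss u t' := by
  classical
  rcases hgood with h0 | ⟨w, huw, hwv, htw⟩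
  · -- case t v = 0 : split the upset of u into [u,v] and the rest
    set s0 : Finset V := Finset.univ.filter (fun w => u ≤ w) with hs0
    have split1 : (∑ x ∈ s0.filter (fun x => x ≤ v), t x) +
        ∑ x ∈ s0.filter (fun x => ¬ x ≤ v), t x = ∑ x ∈ s0, t x :=
      Finset.sum_filter_add_sum_filter_not s0 _ t
    have split2 : (∑ x ∈ s0.filter (fun x => x ≤ v), t' x) +
        ∑ x ∈ s0.filter (fun x => ¬ x ≤ v), t' x = ∑ x ∈ s0, t' x :=
      Finset.sum_filter_add_sum_filter_not s0 _ t'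
    have hC : (∑ x ∈ s0.filter (fun x => x ≤ v), t x) <
        ∑ x ∈ s0.filter (fun x => x ≤ v), t' x := by
      apply Finset.sum_lt_sum
      · intro x hx
        simp only [hs0, Finset.mem_filter, Finset.mem_univ, true_and] at hx
        rcases eq_or_lt_of_le hx.2 with rfl | hlt
        · rw [h0]; exact Nat.zero_le _
        · rw [hfull x hx.1 hlt]; exact ht x
      · refine ⟨v, by simp [hs0, hu], ?_⟩
        rw [h0]; omega
    have hUp : (∑ x ∈ s0.filter (fun x => ¬ x ≤ v), t x) ≤
        ∑ x ∈ s0.filter (fun x => ¬ x ≤ v), t' x := by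
      apply upper_sum_le hchain t t' hdom
      intro x hx y hxy
      simp only [hs0, Finset.mem_filter, Finset.mem_univ, true_and] at hx ⊢
      exact ⟨le_trans hx.1 hxy, fun hyv => hx.2 (le_trans hxy hyv)⟩
    show (∑ x ∈ s0, t x) < ∑ x ∈ s0, t' x
    omega
  · -- case there is w with u ≤ w < v, t w < T w
    -- s : least element of (w, v]
    have hSne : (Finset.univ.filter (fun x => w < x ∧ x ≤ v)).Nonempty :=
      ⟨v, by simp [hwv]⟩
    obtain ⟨s, hsmem, hsmin⟩ := (by obtain ⟨m, hm⟩ := Finset.exists_minimal hSne; exact ⟨m, hm.1, fun x hx hlt => lt_irrefl _ (lt_of_lt_of_le hlt (hm.2 hx hlt.le))⟩ : ∃ m ∈ Finset.univ.filter (fun x => w < x ∧ x ≤ v), ∀ x ∈ Finset.univ.filter (fun x => w < x ∧ x ≤ v), ¬ x < m)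
    simp only [Finset.mem_filter, Finset.mem_univ, true_and] at hsmem
    obtain ⟨hws, hsv⟩ := hsmem
    have hsleast : ∀ x, w < x → x ≤ v → s ≤ x := by
      intro x hwx hxv
      by_cases hxs : x = s
      · exact le_of_eq hxs.symm
      rcases hchain v (show x ∈ {z | z ≤ v} from hxv)
        (show s ∈ {z | z ≤ v} from hsv) hxs with h | h
      · exact absurd (lt_of_le_of_ne h hxs)
          (hsmin x (by simp [hwx, hxv]))
      · exact h
    have hus : u ≤ s := le_trans huw (le_of_lt hws)
    set s0 : Finset V := Finset.univ.filter (fun x => u ≤ x) with hs0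
    set sP : Finset V := Finset.univ.filter (fun x => s ≤ x) with hsP
    have hPsub : sP ⊆ s0 := by
      intro x hx
      simp only [hsP, Finset.mem_filter, Finset.mem_univ, true_and] at hx
      simp [hs0, le_trans hus hx]
    have e1 : (∑ x ∈ s0 \ sP, t x) + ∑ x ∈ sP, t x = ∑ x ∈ s0, t x :=
      Finset.sum_sdiff hPsub
    have e2 : (∑ x ∈ s0 \ sP, t' x) + ∑ x ∈ sP, t' x = ∑ x ∈ s0, t' x :=
      Finset.sum_sdiff hPsub
    have hdomS : (∑ x ∈ sP, t x) ≤ ∑ x ∈ sP, t' x := hdom s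
    -- split the region s0 \ sP by (· ≤ v)
    have split1 : (∑ x ∈ (s0 \ sP).filter (fun x => x ≤ v), t x) +
        ∑ x ∈ (s0 \ sP).filter (fun x => ¬ x ≤ v), t x = ∑ x ∈ s0 \ sP, t x :=
      Finset.sum_filter_add_sum_filter_not _ _ t
    have split2 : (∑ x ∈ (s0 \ sP).filter (fun x => x ≤ v), t' x) +
        ∑ x ∈ (s0 \ sP).filter (fun x => ¬ x ≤ v), t' x = ∑ x ∈ s0 \ sP, t' x :=
      Finset.sum_filter_add_sum_filter_not _ _ t'
    have hmemC : ∀ x, x ∈ (s0 \ sP).filter (fun x => x ≤ v) ↔ (u ≤ x ∧ x ≤ w) := by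
      intro x
      simp only [hs0, hsP, Finset.mem_filter, Finset.mem_sdiff, Finset.mem_univ,
        true_and]
      constructor
      · rintro ⟨⟨hux, hsx⟩, hxv⟩
        refine ⟨hux, ?_⟩
        by_cases hxw : x = w
        · exact le_of_eq hxw
        rcases hchain v (show x ∈ {z | z ≤ v} from hxv)
          (show w ∈ {z | z ≤ v} from le_of_lt hwv) hxw with h | h
        · exact h
        · exact absurd (hsleast x (lt_of_le_of_ne h (Ne.symm hxw)) hxv) hsx
      · rintro ⟨hux, hxw⟩
        refine ⟨⟨hux, fun hsx => ?_⟩, le_trans hxw (le_of_lt hwv)⟩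
        exact absurd (le_trans hsx hxw) (not_le_of_gt hws)
    have hC : (∑ x ∈ (s0 \ sP).filter (fun x => x ≤ v), t x) <
        ∑ x ∈ (s0 \ sP).filter (fun x => x ≤ v), t' x := by
      apply Finset.sum_lt_sum
      · intro x hx
        obtain ⟨hux, hxw⟩ := (hmemC x).mp hx
        rw [hfull x hux (lt_of_le_of_lt hxw hwv)]
        exact ht x
      · refine ⟨w, (hmemC w).mpr ⟨huw, le_rfl⟩, ?_⟩
        rw [hfull w huw hwv]
        exact htw
    have hUp : (∑ x ∈ (s0 \ sP).filter (fun x => ¬ x ≤ v), t x) ≤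
        ∑ x ∈ (s0 \ sP).filter (fun x => ¬ x ≤ v), t' x := by
      apply upper_sum_le hchain t t' hdom
      intro x hx y hxy
      simp only [hs0, hsP, Finset.mem_filter, Finset.mem_sdiff, Finset.mem_univ,
        true_and] at hx ⊢
      obtain ⟨⟨hux, hsx⟩, hxv⟩ := hx
      refine ⟨⟨le_trans hux hxy, fun hsy => ?_⟩, fun hyv => hxv (le_trans hxy hyv)⟩
      by_cases hxs : x = s
      · exact hsx (le_of_eq hxs.symm)
      rcases hchain y (show x ∈ {z | z ≤ y} from hxy)
        (show s ∈ {z | z ≤ y} from hsy) hxs with h | h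
      · exact hxv (le_trans h hsv)
      · exact hsx h
    show (∑ x ∈ s0, t x) < ∑ x ∈ s0, t' x
    omega

/-- Trichotomy for the action of θ on a legal configuration. -/
private lemma theta_cases (T : V → ℕ) (v : V) (θ : (V → ℕ) → (V → ℕ))
    (hθ : stepSpec T v θ) (t : V → ℕ) (ht : ∀ w, t w ≤ T w) :
    (t v = 0 ∧ θ t = t) ∨
    (1 ≤ t v ∧ (∀ x, x < v → t x = T x) ∧ θ t = Function.update t v (t v - 1)) ∨
    (∃ w, 1 ≤ t v ∧ w < v ∧ t w < T w ∧ (∀ x, w < x → x < v → t x = T x) ∧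
      θ t = Function.update (Function.update t v (t v - 1)) w (t w + 1)) := by
  classical
  obtain h := hθ t ht
  rcases Nat.eq_zero_or_pos (t v) with h0 | hpos
  · exact Or.inl ⟨h0, h.1 h0⟩
  obtain ⟨hB, hC⟩ := h.2 hpos
  by_cases hF : ∀ x, x < v → t x = T x
  · exact Or.inr (Or.inl ⟨hpos, hF, hB hF⟩)
  · push_neg at hF
    obtain ⟨x0, hx0v, hx0⟩ := hF
    have hx0' : t x0 < T x0 := lt_of_le_of_ne (ht x0) hx0
    have hne : (Finset.univ.filter (fun x => x < v ∧ t x < T x)).Nonempty :=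
      ⟨x0, by simp [hx0v, hx0']⟩
    obtain ⟨w, hwmem, hwmax⟩ := (by obtain ⟨m, hm⟩ := Finset.exists_maximal hne; exact ⟨m, hm.1, fun x hx hlt => lt_irrefl _ (lt_of_lt_of_le hlt (hm.2 hx hlt.le))⟩ : ∃ m ∈ Finset.univ.filter (fun x => x < v ∧ t x < T x), ∀ x ∈ Finset.univ.filter (fun x => x < v ∧ t x < T x), ¬ m < x)
    simp only [Finset.mem_filter, Finset.mem_univ, true_and] at hwmem
    obtain ⟨hwv, htw⟩ := hwmem
    have hbet : ∀ x, w < x → x < v → t x = T x := by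
      intro x hwx hxv
      by_contra hx
      exact hwmax x (by simp [hxv, lt_of_le_of_ne (ht x) hx]) hwx
    exact Or.inr (Or.inr ⟨w, hpos, hwv, htw, hbet, hC w hwv htw hbet⟩)

end Aux

/-- the single-grain topple operator θ_v preserves the dominance order:
t ⊴ t' implies θ_v(t) ⊴ θ_v(t'). -/
theorem stmt9 (V : Type*) [Fintype V] [PartialOrder V] [DecidableEq V]
    [DecidableRel ((· ≤ ·) : V → V → Prop)]
    (hroot : ∃ r : V, ∀ v, r ≤ v)
    (hchain : ∀ v : V, IsChain (· ≤ ·) {w | w ≤ v})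
    (T : V → ℕ) (hT : ∀ v, 1 ≤ T v) (v : V)
    (θ : (V → ℕ) → (V → ℕ)) (hθ : stepSpec T v θ)
    (t t' : V → ℕ) (ht : ∀ w, t w ≤ T w) (ht' : ∀ w, t' w ≤ T w)
    (hdom : domRel t t') :
    domRel (θ t) (θ t') := by
  classical
  intro u
  show Ss u (θ t) ≤ Ss u (θ t')
  have hdu : Ss u t ≤ Ss u t' := hdom u
  set s0 : Finset V := Finset.univ.filter (fun w => u ≤ w) with hs0
  by_cases hu : u ≤ v
  case neg =>
    -- neither v nor any w < v lies in the upset of u; both sides are unchanged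
    have hvmem : v ∉ s0 := by simp [hs0, hu]
    have hwmem : ∀ w : V, w < v → w ∉ s0 := by
      intro w hwv
      simp only [hs0, Finset.mem_filter, Finset.mem_univ, true_and]
      exact fun huw => hu (le_trans huw (le_of_lt hwv))
    have key : ∀ s : V → ℕ, (∀ w, s w ≤ T w) → Ss u (θ s) = Ss u s := by
      intro s hs
      rcases theta_cases T v θ hθ s hs with ⟨_, hE⟩ | ⟨_, _, hE⟩ |
        ⟨w, _, hwv, _, _, hE⟩
      · rw [hE]
      · rw [hE]; exact sum_upd_notmem s0 s v _ hvmem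
      · rw [hE, Ss]
        rw [show (Finset.univ.filter fun w => u ≤ w) = s0 from rfl]
        rw [sum_upd_notmem s0 _ w _ (hwmem w hwv),
          sum_upd_notmem s0 s v _ hvmem]
        rfl
    rw [key t ht, key t' ht']
    exact hdu
  case pos =>
    have hvmem : v ∈ s0 := by simp [hs0, hu]
    -- analysis of the t-side
    have hTside : (Ss u (θ t) + 1 = Ss u t) ∨
        (Ss u (θ t) = Ss u t ∧
          (t v = 0 ∨ ∃ w, u ≤ w ∧ w < v ∧ t w < T w)) := by
      rcases theta_cases T v θ hθ t ht with ⟨h0, hE⟩ | ⟨h1, _, hE⟩ |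
        ⟨w, h1, hwv, htww, _, hE⟩
      · exact Or.inr ⟨by rw [hE], Or.inl h0⟩
      · left
        have := sum_upd_mem s0 t v (t v - 1) hvmem
        rw [← hE] at this
        have h2 : Ss u (θ t) = ∑ x ∈ s0, θ t x := rfl
        have h3 : Ss u t = ∑ x ∈ s0, t x := rfl
        omega
      · have hgw : Function.update t v (t v - 1) w = t w :=
          Function.update_of_ne (ne_of_lt hwv) _ _
        have e1 := sum_upd_mem s0 t v (t v - 1) hvmem
        by_cases huw : u ≤ w
        · right
          have hwmem : w ∈ s0 := by simp [hs0, huw]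
          have e2 := sum_upd_mem s0 (Function.update t v (t v - 1)) w (t w + 1) hwmem
          rw [← hE, hgw] at e2
          have h2 : Ss u (θ t) = ∑ x ∈ s0, θ t x := rfl
          have h3 : Ss u t = ∑ x ∈ s0, t x := rfl
          exact ⟨by omega, Or.inr ⟨w, huw, hwv, htww⟩⟩
        · left
          have hwmem : w ∉ s0 := by simp [hs0, huw]
          have e2 := sum_upd_notmem s0 (Function.update t v (t v - 1)) w (t w + 1) hwmem
          rw [← hE] at e2
          have h2 : Ss u (θ t) = ∑ x ∈ s0, θ t x := rfl
          have h3 : Ss u t = ∑ x ∈ s0, t x := rfl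
          omega
    -- analysis of the t'-side
    have hT'side : (Ss u (θ t') = Ss u t') ∨
        (Ss u (θ t') + 1 = Ss u t' ∧ 1 ≤ t' v ∧
          (∀ x, u ≤ x → x < v → t' x = T x)) := by
      rcases theta_cases T v θ hθ t' ht' with ⟨h0, hE⟩ | ⟨h1, hfull, hE⟩ |
        ⟨w, h1, hwv, htww, hbet, hE⟩
      · exact Or.inl (by rw [hE])
      · right
        have e1 := sum_upd_mem s0 t' v (t' v - 1) hvmem
        rw [← hE] at e1
        have h2 : Ss u (θ t') = ∑ x ∈ s0, θ t' x := rfl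
        have h3 : Ss u t' = ∑ x ∈ s0, t' x := rfl
        exact ⟨by omega, h1, fun x _ hxv => hfull x hxv⟩
      · have hgw : Function.update t' v (t' v - 1) w = t' w :=
          Function.update_of_ne (ne_of_lt hwv) _ _
        have e1 := sum_upd_mem s0 t' v (t' v - 1) hvmem
        by_cases huw : u ≤ w
        · left
          have hwmem : w ∈ s0 := by simp [hs0, huw]
          have e2 := sum_upd_mem s0 (Function.update t' v (t' v - 1)) w (t' w + 1) hwmem
          rw [← hE, hgw] at e2
          have h2 : Ss u (θ t') = ∑ x ∈ s0, θ t' x := rfl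
          have h3 : Ss u t' = ∑ x ∈ s0, t' x := rfl
          omega
        · right
          have hwmem : w ∉ s0 := by simp [hs0, huw]
          have e2 := sum_upd_notmem s0 (Function.update t' v (t' v - 1)) w (t' w + 1) hwmem
          rw [← hE] at e2
          have h2 : Ss u (θ t') = ∑ x ∈ s0, θ t' x := rfl
          have h3 : Ss u t' = ∑ x ∈ s0, t' x := rfl
          refine ⟨by omega, h1, ?_⟩
          -- everything in [u, v) is full in t'
          intro x hux hxv
          have hxw : x ≠ w := by
            rintro rfl; exact huw hux
          rcases hchain v (show x ∈ {z | z ≤ v} from le_of_lt hxv)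
            (show w ∈ {z | z ≤ v} from le_of_lt hwv) hxw with h | h
          · exact absurd (le_trans hux h) huw
          · exact hbet x (lt_of_le_of_ne h (Ne.symm hxw)) hxv
    rcases hT'side with hA' | ⟨hB', h1', hfull'⟩
    · rcases hTside with hA | ⟨hB, _⟩ <;> omega
    · rcases hTside with hA | ⟨hB, hgood⟩
      · omega
      · have := key_lt hchain T t t' ht hdom u v hu hfull' h1' hgood
        omega
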